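/- If h is a log-concave probability density on ℝ with median w, then h(x) ≤ 2 h(w) for every x ∈ ℝ. -/

import Mathlib

open MeasureTheory

def LogConcaveFn (h : ℝ → ℝ) : Prop :=
  (∀ x, 0 ≤ h x) ∧
  ∀ x y l : ℝ, 0 < l → l < 1 → h x ^ (1 - l) * h y ^ l ≤ h ((1 - l) * x + l * y)

set_option maxHeartbeats 1000000 in
lemma logconcave_aux
    (h : ℝ → ℝ) (hlc : LogConcaveFn h)
    (hi : Integrable h) (h1 : ∫ x, h x = 1)
    (w : ℝ) (hw : ∫ x in Set.Iic w, h x = 1 / 2)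
    (x : ℝ) (hxw : x ≤ w) :
    h x ≤ 2 * h w := by
  by_contra hcon
  push_neg at hcon
  have hnn := hlc.1
  have hx0 : 0 < h x := lt_of_le_of_lt (by linarith [hnn w]) hcon
  have hxw' : x < w := by
    rcases lt_or_eq_of_le hxw with h' | h'
    · exact h'
    · subst h'; linarith [hnn x]
  set d : ℝ := w - x with hd_def
  have hd : 0 < d := sub_pos.mpr hxw'
  have hdne : d ≠ 0 := ne_of_gt hd
  have hlog2 : (0:ℝ) < Real.log 2 := Real.log_pos one_lt_two
  set c : ℝ := Real.log 2 / d with hc_def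
  have hcpos : 0 < c := div_pos hlog2 hd
  -- the right tail has mass 1/2
  have tail : ∫ t in Set.Ioi w, h t = 1/2 := by
    have t := intervalIntegral.integral_Iic_add_Ioi (b := w) (f := h) (μ := volume)
      hi.integrableOn hi.integrableOn
    rw [hw, h1] at t
    linarith
  -- pointwise exponential upper bound on the right tail
  have upper : ∀ t ∈ Set.Ioi w, h t ≤ (h w * Real.exp (c*w)) * Real.exp (-c * t) := by
    intro t ht
    rw [Set.mem_Ioi] at ht
    have htx : 0 < t - x := by linarith
    have htxne : t - x ≠ 0 := ne_of_gt htx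
    set l : ℝ := d / (t - x) with hl_def
    have hl0 : 0 < l := div_pos hd htx
    have hl1 : l < 1 := (div_lt_one htx).mpr (by rw [hd_def]; linarith)
    have hcomb : (1 - l) * x + l * t = w := by
      rw [hl_def, hd_def]
      field_simp
      ring
    have key := hlc.2 x t l hl0 hl1
    rw [hcomb] at key
    set s : ℝ := (t - w)/d with hs_def
    have hs0 : 0 < s := div_pos (by linarith) hd
    have hinv : l⁻¹ = 1 + s := by
      rw [hl_def, hs_def, hd_def]
      field_simp [sub_ne_zero.mpr hxw'.ne']; ring
    have hexps : (1 - l) * l⁻¹ = s := by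
      rw [hl_def, hs_def, hd_def]
      field_simp [sub_ne_zero.mpr hxw'.ne']; ring
    have hxp : 0 < h x ^ (1 - l) := Real.rpow_pos_of_pos hx0 _
    have step1 : h t ^ l ≤ h w / h x ^ (1 - l) := by
      rw [le_div_iff₀ hxp]
      calc h t ^ l * h x ^ (1 - l) = h x ^ (1 - l) * h t ^ l := mul_comm _ _
        _ ≤ h w := key
    have step2 : h t ≤ (h w / h x ^ (1 - l)) ^ l⁻¹ := by
      have h2 := Real.rpow_le_rpow (Real.rpow_nonneg (hnn t) l) step1
        (by positivity : (0:ℝ) ≤ l⁻¹)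
      rwa [Real.rpow_rpow_inv (hnn t) (ne_of_gt hl0)] at h2
    have rhs_eq : (h w / h x ^ (1 - l)) ^ l⁻¹ = h w * ((h w / h x) ^ s) := by
      rw [Real.div_rpow (hnn w) hxp.le, ← Real.rpow_mul hx0.le, hexps, hinv,
        Real.rpow_add' (hnn w) (by positivity), Real.rpow_one,
        Real.div_rpow (hnn w) hx0.le]
      ring
    have ratio : h w / h x ≤ 1/2 := by
      rw [div_le_div_iff₀ hx0 two_pos]
      linarith
    have bound : (h w / h x) ^ s ≤ (1/2 : ℝ) ^ s :=
      Real.rpow_le_rpow (div_nonneg (hnn w) hx0.le) ratio hs0.le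
    have half_eq : ((1:ℝ)/2) ^ s = Real.exp (c*w) * Real.exp (-c * t) := by
      rw [← Real.exp_add, Real.rpow_def_of_pos (by norm_num : (0:ℝ) < 1/2)]
      congr 1
      rw [show Real.log (1/2) = - Real.log 2 by rw [one_div, Real.log_inv], hs_def, hc_def]
      field_simp
      ring
    calc h t ≤ (h w / h x ^ (1 - l)) ^ l⁻¹ := step2
      _ = h w * ((h w / h x) ^ s) := rhs_eq
      _ ≤ h w * ((1/2:ℝ) ^ s) := mul_le_mul_of_nonneg_left bound (hnn w)
      _ = (h w * Real.exp (c*w)) * Real.exp (-c * t) := by rw [half_eq]; ring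
  -- upper integral bound
  have int_bd : IntegrableOn (fun t => (h w * Real.exp (c*w)) * Real.exp (-c * t)) (Set.Ioi w) :=
    (exp_neg_integrableOn_Ioi w hcpos).const_mul _
  have int_val : ∫ t in Set.Ioi w, (h w * Real.exp (c*w)) * Real.exp (-c * t) = h w / c := by
    rw [MeasureTheory.integral_const_mul]
    have e : ∫ t in Set.Ioi w, Real.exp (-c * t) = c⁻¹ * Real.exp (-(c*w)) := by
      have e2 := integral_comp_mul_left_Ioi (fun u => Real.exp (-u)) w hcpos
      simp only [smul_eq_mul] at e2
      rw [integral_exp_neg_Ioi] at e2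
      simpa [neg_mul] using e2
    rw [e, Real.exp_neg]
    rw [eq_div_iff (ne_of_gt hcpos)]
    field_simp
  have A : 1/2 ≤ h w * d / Real.log 2 := by
    have mono := setIntegral_mono_on hi.integrableOn int_bd measurableSet_Ioi upper
    rw [tail, int_val] at mono
    calc (1:ℝ)/2 ≤ h w / c := mono
      _ = h w * d / Real.log 2 := by rw [hc_def, div_div_eq_mul_div]
  have hw0 : 0 < h w := by
    by_contra hw0
    push_neg at hw0
    have A' := (le_div_iff₀ hlog2).mp A
    nlinarith [mul_nonneg (neg_nonneg.mpr hw0) hd.le]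
  set r : ℝ := h x / h w with hr_def
  have hr : 2 < r := (lt_div_iff₀ hw0).mpr (by linarith)
  have hrpos : (0:ℝ) < r := by linarith
  have hlogr : 0 < Real.log r := Real.log_pos (by linarith)
  set c' : ℝ := Real.log r / d with hc'_def
  have hc'pos : 0 < c' := div_pos hlogr hd
  -- pointwise exponential lower bound on (x, w)
  have lower : ∀ t ∈ Set.Ioo x w, (h w * Real.exp (c'*w)) * Real.exp (-c' * t) ≤ h t := by
    intro t ht
    obtain ⟨ht1, ht2⟩ := ht
    set l : ℝ := (t - x)/d with hl_def
    have hl0 : 0 < l := div_pos (by linarith) hd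
    have hl1 : l < 1 := (div_lt_one hd).mpr (by rw [hd_def]; linarith)
    have hcomb : (1-l)*x + l*w = t := by
      rw [hl_def, hd_def]
      field_simp [sub_ne_zero.mpr hxw'.ne']
      ring
    have key := hlc.2 x w l hl0 hl1
    rw [hcomb] at key
    refine le_trans (le_of_eq ?_) key
    have hxw_eq : h x = h w * r := by rw [hr_def]; field_simp
    rw [hxw_eq, Real.mul_rpow (hnn w) hrpos.le]
    have h1l : h w ^ (1-l) * h w ^ l = h w := by
      rw [← Real.rpow_add hw0]; simp
    have hrterm : r ^ (1 - l) = Real.exp (c'*w) * Real.exp (-c' * t) := by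
      rw [← Real.exp_add, Real.rpow_def_of_pos hrpos]
      congr 1
      rw [hc'_def, hl_def, hd_def]
      field_simp [sub_ne_zero.mpr hxw'.ne']
      ring
    calc (h w * Real.exp (c'*w)) * Real.exp (-c' * t)
        = h w * (Real.exp (c'*w) * Real.exp (-c' * t)) := by ring
      _ = h w * r ^ (1-l) := by rw [hrterm]
      _ = (h w ^ (1-l) * h w ^ l) * r ^ (1-l) := by rw [h1l]
      _ = h w ^ (1-l) * r ^ (1-l) * h w ^ l := by ring
  have int_lower_int : IntegrableOn
      (fun t => (h w * Real.exp (c'*w)) * Real.exp (-c' * t)) (Set.Ioo x w) := by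
    have hcont : Continuous fun t : ℝ => (h w * Real.exp (c'*w)) * Real.exp (-c' * t) := by
      fun_prop
    exact (hcont.integrableOn_Icc (a := x) (b := w)).mono_set Set.Ioo_subset_Icc_self
  have int_lower_val : ∫ t in Set.Ioo x w, (h w * Real.exp (c'*w)) * Real.exp (-c' * t)
      = h w * ((r - 1) * d / Real.log r) := by
    rw [← MeasureTheory.integral_Ioc_eq_integral_Ioo,
      ← intervalIntegral.integral_of_le hxw'.le, intervalIntegral.integral_const_mul]
    have hne : (-c') ≠ 0 := neg_ne_zero.mpr (ne_of_gt hc'pos)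
    have e3 : (∫ t in x..w, Real.exp (-c' * t))
        = (Real.exp (-c'*x) - Real.exp (-c'*w))/c' := by
      have e4 := intervalIntegral.integral_comp_mul_left Real.exp (a := x) (b := w) hne
      rw [integral_exp, smul_eq_mul] at e4
      rw [e4]
      field_simp
      ring
    rw [e3]
    have e1 : Real.exp (c'*w) * Real.exp (-c'*x) = r := by
      rw [← Real.exp_add]
      have e5 : c'*w + -c'*x = Real.log r := by
        rw [hc'_def]; field_simp; ring
      rw [e5, Real.exp_log hrpos]
    have e2 : Real.exp (c'*w) * Real.exp (-c'*w) = 1 := by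
      rw [← Real.exp_add]; simp
    calc h w * Real.exp (c'*w) * ((Real.exp (-c'*x) - Real.exp (-c'*w))/c')
        = h w * ((Real.exp (c'*w) * Real.exp (-c'*x)
            - Real.exp (c'*w) * Real.exp (-c'*w))/c') := by ring
      _ = h w * ((r - 1)/c') := by rw [e1, e2]
      _ = h w * ((r-1)*d/Real.log r) := by rw [hc'_def, div_div_eq_mul_div]
  have B : h w * ((r-1)*d/Real.log r) ≤ 1/2 := by
    have m1 := setIntegral_mono_on int_lower_int hi.integrableOn measurableSet_Ioo lower
    have m2 : ∫ t in Set.Ioo x w, h t ≤ ∫ t in Set.Iic w, h t :=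
      setIntegral_mono_set hi.integrableOn
        (Filter.Eventually.of_forall fun a => hnn a)
        (show Set.Ioo x w ⊆ Set.Iic w from fun a ha => le_of_lt ha.2).eventuallyLE
    rw [hw] at m2
    rw [int_lower_val] at m1
    linarith
  have key2 : (r - 1) * Real.log 2 ≤ Real.log r := by
    have hAB : (h w * d) * (r - 1) / Real.log r ≤ (h w * d) / Real.log 2 := by
      calc (h w * d) * (r-1)/Real.log r = h w * ((r-1)*d/Real.log r) := by ring
        _ ≤ 1/2 := B
        _ ≤ h w * d / Real.log 2 := A
    rw [div_le_div_iff₀ hlogr hlog2] at hAB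
    have hP : 0 < h w * d := mul_pos hw0 hd
    nlinarith [hAB, hP]
  have logr_le : Real.log r ≤ Real.log 2 + (r/2 - 1) := by
    have h2 : Real.log (r/2) ≤ r/2 - 1 := Real.log_le_sub_one_of_pos (by linarith)
    rw [Real.log_div (by linarith : r ≠ 0) two_ne_zero] at h2
    linarith
  nlinarith [key2, logr_le, hr,
    mul_pos (sub_pos.mpr hr) (show (0:ℝ) < Real.log 2 - 1/2 by
      nlinarith [Real.log_two_gt_d9])]

theorem logconcave_max_le_twice_median
    (h : ℝ → ℝ) (hlc : LogConcaveFn h)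
    (hi : Integrable h) (h1 : ∫ x, h x = 1)
    (w : ℝ) (hw : ∫ x in Set.Iic w, h x = 1 / 2)
    (x : ℝ) :
    h x ≤ 2 * h w := by
  rcases le_total x w with hxw | hwx
  · exact logconcave_aux h hlc hi h1 w hw x hxw
  · have glc : LogConcaveFn (fun t => h (-t)) := by
      refine ⟨fun t => hlc.1 _, fun a b l hl0 hl1 => ?_⟩
      have key := hlc.2 (-a) (-b) l hl0 hl1
      have e : (1-l) * -a + l * -b = -((1-l)*a + l*b) := by ring
      rw [e] at key
      exact key
    have gi : Integrable (fun t => h (-t)) := hi.comp_neg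
    have g1 : ∫ t, h (-t) = 1 := by rw [integral_neg_eq_self]; exact h1
    have gw : ∫ t in Set.Iic (-w), h (-t) = 1/2 := by
      rw [integral_comp_neg_Iic, neg_neg]
      have t := intervalIntegral.integral_Iic_add_Ioi (b := w) (f := h) (μ := volume)
        hi.integrableOn hi.integrableOn
      rw [hw, h1] at t
      linarith
    have := logconcave_aux (fun t => h (-t)) glc gi g1 (-w) gw (-x) (neg_le_neg hwx)
    simpa using this
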